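/- The complete tripartite graph K_{1,1,n} is interval colorable if and only if n is even. -/

import Mathlib

/-- The set of colors on edges incident to `v` (the spectrum of `v`). -/
def Spectrum {V : Type*} (G : SimpleGraph V) (c : G.edgeSet → ℕ) (v : V) : Set ℕ :=
  {k | ∃ e : G.edgeSet, v ∈ (e : Sym2 V) ∧ c e = k}

/-- `c` is an interval `t`-coloring of `G`: a proper edge-coloring with colors
`1,…,t`, all colors used, and each vertex's spectrum an interval of integers. -/
def IsIntervalColoring {V : Type*} (G : SimpleGraph V) (t : ℕ) (c : G.edgeSet → ℕ) : Prop :=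
  (∀ e, 1 ≤ c e ∧ c e ≤ t) ∧
  (∀ k, 1 ≤ k → k ≤ t → ∃ e, c e = k) ∧
  (∀ e₁ e₂ : G.edgeSet, e₁ ≠ e₂ → (∃ v, v ∈ (e₁ : Sym2 V) ∧ v ∈ (e₂ : Sym2 V)) →
    c e₁ ≠ c e₂) ∧
  (∀ v : V, ∃ a b : ℕ, Spectrum G c v = Set.Icc a b)

/-- Which part of the tripartition a vertex belongs to. -/
def tripart (m n : ℕ) : Fin 1 ⊕ Fin m ⊕ Fin n → Fin 3
  | .inl _ => 0
  | .inr (.inl _) => 1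
  | .inr (.inr _) => 2

/-- The complete tripartite graph `K_{1,m,n}`. -/
def K1mn (m n : ℕ) : SimpleGraph (Fin 1 ⊕ Fin m ⊕ Fin n) where
  Adj a b := tripart m n a ≠ tripart m n b
  symm := ⟨fun _ _ h => h.symm⟩
  loopless := ⟨fun _ h => h rfl⟩

namespace K11
variable {n : ℕ}
abbrev V (n : ℕ) := Fin 1 ⊕ Fin 1 ⊕ Fin n
def u : V n := Sum.inl 0
def v : V n := Sum.inr (Sum.inl 0)
def w (i : Fin n) : V n := Sum.inr (Sum.inr i)
lemma adj_uv : (K1mn 1 n).Adj u v := by simp [K1mn, tripart, u, v]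
lemma adj_uw (i : Fin n) : (K1mn 1 n).Adj u (w i) := by simp [K1mn, tripart, u, w]
lemma adj_vw (i : Fin n) : (K1mn 1 n).Adj v (w i) := by simp [K1mn, tripart, v, w]
def euv : (K1mn 1 n).edgeSet := ⟨s(u, v), adj_uv⟩
def eu (i : Fin n) : (K1mn 1 n).edgeSet := ⟨s(u, w i), adj_uw i⟩
def ev (i : Fin n) : (K1mn 1 n).edgeSet := ⟨s(v, w i), adj_vw i⟩
lemma edge_cases (e : (K1mn 1 n).edgeSet) :
    e = euv ∨ (∃ i, e = eu i) ∨ (∃ i, e = ev i) := by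
  obtain ⟨e, he⟩ := e
  induction e using Sym2.ind with
  | _ x y =>
    rw [SimpleGraph.mem_edgeSet] at he
    rcases x with x | x | x <;> rcases y with y | y | y <;>
      simp only [K1mn, tripart, ne_eq, not_true_eq_false] at he
    · have hx : x = 0 := Subsingleton.elim _ _
      have hy : y = 0 := Subsingleton.elim _ _
      subst hx hy
      exact Or.inl (Subtype.ext rfl)
    · exact Or.inr (Or.inl ⟨y, Subtype.ext (by
        have hx : x = 0 := Subsingleton.elim _ _; subst hx; rfl)⟩)
    · have hx : x = 0 := Subsingleton.elim _ _
      have hy : y = 0 := Subsingleton.elim _ _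
      subst hx hy
      exact Or.inl (Subtype.ext Sym2.eq_swap)
    · exact Or.inr (Or.inr ⟨y, Subtype.ext (by
        have hx : x = 0 := Subsingleton.elim _ _; subst hx; rfl)⟩)
    · exact Or.inr (Or.inl ⟨x, Subtype.ext (by
        have hy : y = 0 := Subsingleton.elim _ _; subst hy; exact Sym2.eq_swap)⟩)
    · exact Or.inr (Or.inr ⟨x, Subtype.ext (by
        have hy : y = 0 := Subsingleton.elim _ _; subst hy; exact Sym2.eq_swap)⟩)
lemma mem_euv (x : V n) : x ∈ (euv : (K1mn 1 n).edgeSet).val ↔ x = u ∨ x = v := by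
  simp [euv, Sym2.mem_iff]
lemma mem_eu (x : V n) (i : Fin n) : x ∈ (eu i).val ↔ x = u ∨ x = w i := by
  simp [eu, Sym2.mem_iff]
lemma mem_ev (x : V n) (i : Fin n) : x ∈ (ev i).val ↔ x = v ∨ x = w i := by
  simp [ev, Sym2.mem_iff]
@[simp] lemma u_ne_v : (u : V n) ≠ v := by simp [u, v]
@[simp] lemma u_ne_w (i : Fin n) : (u : V n) ≠ w i := by simp [u, w]
@[simp] lemma v_ne_w (i : Fin n) : (v : V n) ≠ w i := by simp [v, w]
@[simp] lemma w_inj {i j : Fin n} : (w i : V n) = w j ↔ i = j := by simp [w]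
lemma euv_ne_eu (i : Fin n) : (euv : (K1mn 1 n).edgeSet) ≠ eu i := by
  simp [euv, eu, Sym2.eq_iff, Subtype.ext_iff, u, v, w]
lemma euv_ne_ev (i : Fin n) : (euv : (K1mn 1 n).edgeSet) ≠ ev i := by
  simp [euv, ev, Sym2.eq_iff, Subtype.ext_iff, u, v, w]
lemma eu_ne_ev (i j : Fin n) : (eu i : (K1mn 1 n).edgeSet) ≠ ev j := by
  simp [eu, ev, Sym2.eq_iff, Subtype.ext_iff, u, v, w]
lemma eu_inj {i j : Fin n} (h : (eu i : (K1mn 1 n).edgeSet) = eu j) : i = j := by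
  simpa [eu, Sym2.eq_iff, Subtype.ext_iff, u, w] using h
lemma ev_inj {i j : Fin n} (h : (ev i : (K1mn 1 n).edgeSet) = ev j) : i = j := by
  simpa [ev, Sym2.eq_iff, Subtype.ext_iff, v, w] using h
lemma u_mem_euv : (u : V n) ∈ (euv : (K1mn 1 n).edgeSet).val := (mem_euv u).mpr (Or.inl rfl)
lemma v_mem_euv : (v : V n) ∈ (euv : (K1mn 1 n).edgeSet).val := (mem_euv v).mpr (Or.inr rfl)
lemma u_mem_eu (i : Fin n) : (u : V n) ∈ (eu i).val := (mem_eu u i).mpr (Or.inl rfl)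
lemma v_mem_ev (i : Fin n) : (v : V n) ∈ (ev i).val := (mem_ev v i).mpr (Or.inl rfl)
lemma w_mem_eu (i : Fin n) : (w i : V n) ∈ (eu i).val := (mem_eu _ i).mpr (Or.inr rfl)
lemma w_mem_ev (i : Fin n) : (w i : V n) ∈ (ev i).val := (mem_ev _ i).mpr (Or.inr rfl)

lemma sumIcc (α m : ℕ) : ((Finset.Icc α (α + m)).sum id) * 2 = (2 * α + m) * (m + 1) := by
  induction m with
  | zero => simp [Finset.Icc_self]; ring
  | succ m ih =>
    rw [← add_assoc, Finset.sum_Icc_succ_top (by omega : α ≤ α + m + 1)]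
    calc ((Finset.Icc α (α + m)).sum id + id (α + m + 1)) * 2
        = ((Finset.Icc α (α + m)).sum id) * 2 + (α + m + 1) * 2 := by
          simp only [id_eq]; ring
      _ = (2 * α + m) * (m + 1) + (α + m + 1) * 2 := by rw [ih]
      _ = (2 * α + (m + 1)) * (m + 1 + 1) := by ring

lemma backward (hn : 0 < n) {t : ℕ} {c : (K1mn 1 n).edgeSet → ℕ}
    (h : IsIntervalColoring (K1mn 1 n) t c) : Even n := by
  obtain ⟨hbd, hsurj, hprop, hspec⟩ := h
  by_contra hodd
  rw [Nat.not_even_iff_odd, Nat.odd_iff] at hodd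
  set X := c euv with hX
  set a : Fin n → ℕ := fun i => c (eu i) with ha
  set b : Fin n → ℕ := fun i => c (ev i) with hb
  -- Step 1: each w i contributes an odd sum
  have step1 : ∀ i : Fin n, ∃ p, a i + b i = 2 * p + 1 := by
    intro i
    obtain ⟨p, q, hpq⟩ := hspec (w i)
    have hma : a i ∈ Set.Icc p q := by
      rw [← hpq]; exact ⟨eu i, w_mem_eu i, rfl⟩
    have hmb : b i ∈ Set.Icc p q := by
      rw [← hpq]; exact ⟨ev i, w_mem_ev i, rfl⟩
    rw [Set.mem_Icc] at hma hmb
    have hne : a i ≠ b i :=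
      hprop (eu i) (ev i) (eu_ne_ev i i) ⟨w i, w_mem_eu i, w_mem_ev i⟩
    have hsub : ∀ k ∈ Set.Icc p q, k = a i ∨ k = b i := by
      rw [← hpq]
      rintro k ⟨e, hm, rfl⟩
      rcases edge_cases e with h' | ⟨j, h'⟩ | ⟨j, h'⟩ <;> subst h'
      · rw [mem_euv] at hm
        rcases hm with h' | h'
        · exact absurd h'.symm (u_ne_w i)
        · exact absurd h'.symm (v_ne_w i)
      · rw [mem_eu] at hm
        rcases hm with h' | h'
        · exact absurd h'.symm (u_ne_w i)
        · have : j = i := w_inj.mp h'.symm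
          subst this; exact Or.inl rfl
      · rw [mem_ev] at hm
        rcases hm with h' | h'
        · exact absurd h'.symm (v_ne_w i)
        · have : j = i := w_inj.mp h'.symm
          subst this; exact Or.inr rfl
    have hq2 : q ≤ p + 1 := by
      by_contra h'
      have h1 := hsub (p + 1) (by rw [Set.mem_Icc]; omega)
      have h2 := hsub p (by rw [Set.mem_Icc]; omega)
      have h3 := hsub q (by rw [Set.mem_Icc]; omega)
      rcases h1 with h1 | h1 <;> rcases h2 with h2 | h2 <;> rcases h3 with h3 | h3 <;> omega
    exact ⟨p, by omega⟩
  -- Step 2: the sum of spectrum at u / v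
  have step2 : ∀ (x : V n) (d : Fin n → ℕ),
      (∀ i, d i = c (if x = u then eu i else ev i)) →
      (∀ e : (K1mn 1 n).edgeSet, x ∈ (e : Sym2 (V n)) → e = euv ∨ ∃ i, e = (if x = u then eu i else ev i)) →
      (x ∈ (euv : (K1mn 1 n).edgeSet).val) →
      (∀ i, x ∈ ((if x = u then eu i else ev i) : (K1mn 1 n).edgeSet).val) →
      ∃ α : ℕ, (X + ∑ i, d i) * 2 = (2 * α + n) * (n + 1) := by
    intro x d hd hclass hx1 hx2
    obtain ⟨α, β, hu⟩ := hspec x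
    set ed : Fin n → (K1mn 1 n).edgeSet := fun i => if x = u then eu i else ev i with hed
    have hedne : ∀ i, euv ≠ ed i := by
      intro i; rw [hed]; split
      · exact euv_ne_eu i
      · exact euv_ne_ev i
    have hedinj : Function.Injective ed := by
      intro i j hij
      rw [hed] at hij; simp only at hij
      split at hij
      · exact eu_inj hij
      · exact ev_inj hij
    have hdinj : Function.Injective d := by
      intro i j hij
      by_contra hne'
      exact hprop (ed i) (ed j) (fun h => hne' (hedinj h)) ⟨x, hx2 i, hx2 j⟩
        (by rw [← hd i, ← hd j]; exact hij)
    have hXd : ∀ i, X ≠ d i := by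
      intro i hEq
      simp only [hX, hd i] at hEq
      exact hprop euv (ed i) (hedne i) ⟨x, hx1, hx2 i⟩ (by simp only [hed]; exact hEq)
    set Fu : Finset ℕ := insert X (Finset.image d Finset.univ) with hFu
    have hset : Spectrum (K1mn 1 n) c x = ↑Fu := by
      ext k
      simp only [Spectrum, Set.mem_setOf_eq, hFu, Finset.coe_insert, Set.mem_insert_iff,
        Finset.coe_image, Finset.coe_univ, Set.image_univ, Set.mem_range]
      constructor
      · rintro ⟨e, hm, rfl⟩
        rcases hclass e hm with h' | ⟨i, h'⟩
        · subst h'; exact Or.inl rfl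
        · exact Or.inr ⟨i, by rw [hd i, h']⟩
      · rintro (rfl | ⟨i, rfl⟩)
        · exact ⟨euv, hx1, rfl⟩
        · exact ⟨ed i, hx2 i, (hd i).symm⟩
    have hIcc : Fu = Finset.Icc α β :=
      Finset.coe_injective (by rw [← hset, hu, Finset.coe_Icc])
    have hXnot : X ∉ Finset.image d Finset.univ := by
      simp only [Finset.mem_image, Finset.mem_univ, true_and, not_exists]
      intro i hi
      exact hXd i hi.symm
    have hcard : Fu.card = n + 1 := by
      rw [hFu, Finset.card_insert_of_notMem hXnot,
        Finset.card_image_of_injective _ hdinj, Finset.card_univ, Fintype.card_fin]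
    have hab : α ≤ β := by
      have : X ∈ Fu := Finset.mem_insert_self _ _
      rw [hIcc, Finset.mem_Icc] at this; omega
    have hβ : β = α + n := by
      have := hcard
      rw [hIcc, Nat.card_Icc] at this
      omega
    have hsum : Fu.sum id = X + ∑ i, d i := by
      rw [hFu, Finset.sum_insert hXnot, Finset.sum_image (fun i _ j _ h => hdinj h)]
      rfl
    refine ⟨α, ?_⟩
    rw [← hsum, hIcc, hβ]
    exact sumIcc α n
  have hclassu : ∀ e : (K1mn 1 n).edgeSet, u ∈ (e : Sym2 (V n)) →
      e = euv ∨ ∃ i, e = if (u : V n) = u then eu i else ev i := by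
    intro e hm
    rcases edge_cases e with h' | ⟨i, h'⟩ | ⟨i, h'⟩
    · exact Or.inl h'
    · exact Or.inr ⟨i, by rw [if_pos rfl]; exact h'⟩
    · subst h'
      rw [mem_ev] at hm
      rcases hm with h' | h'
      · exact absurd h' u_ne_v
      · exact absurd h' (u_ne_w i)
  have hclassv : ∀ e : (K1mn 1 n).edgeSet, v ∈ (e : Sym2 (V n)) →
      e = euv ∨ ∃ i, e = if (v : V n) = u then eu i else ev i := by
    intro e hm
    rcases edge_cases e with h' | ⟨i, h'⟩ | ⟨i, h'⟩
    · exact Or.inl h'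
    · subst h'
      rw [mem_eu] at hm
      rcases hm with h' | h'
      · exact absurd h'.symm u_ne_v
      · exact absurd h' (v_ne_w i)
    · exact Or.inr ⟨i, by rw [if_neg (Ne.symm u_ne_v)]; exact h'⟩
  obtain ⟨α, hα⟩ := step2 u a (fun i => by simp [ha]) hclassu u_mem_euv (fun i => by
    simp only [if_pos rfl]; exact u_mem_eu i)
  obtain ⟨γ, hγ⟩ := step2 v b (fun i => by simp [hb, u_ne_v.symm]) hclassv v_mem_euv (fun i => by
    rw [if_neg (Ne.symm u_ne_v)]; exact v_mem_ev i)
  choose p hp using step1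
  have hsum : (∑ i, a i) + (∑ i, b i) = 2 * (∑ i, p i) + n := by
    calc (∑ i, a i) + (∑ i, b i) = ∑ i, (a i + b i) := Finset.sum_add_distrib.symm
      _ = ∑ i, (2 * p i + 1) := Finset.sum_congr rfl (fun i _ => hp i)
      _ = 2 * (∑ i, p i) + n := by
        rw [Finset.sum_add_distrib, ← Finset.mul_sum]
        simp
  have h3 : ((∑ i, a i) + (∑ i, b i) + 2 * X) * 2 = ((n + 1) * (α + γ + n)) * 2 := by
    calc ((∑ i, a i) + (∑ i, b i) + 2 * X) * 2
        = (X + ∑ i, a i) * 2 + (X + ∑ i, b i) * 2 := by ring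
      _ = (2 * α + n) * (n + 1) + (2 * γ + n) * (n + 1) := by rw [hα, hγ]
      _ = ((n + 1) * (α + γ + n)) * 2 := by ring
  have key := Nat.eq_of_mul_eq_mul_right (by norm_num : 0 < 2) h3
  have hev : Even ((n + 1) * (α + γ + n)) :=
    (Nat.even_iff.mpr (by omega) : Even (n + 1)).mul_right _
  obtain ⟨m, hm⟩ := hev
  rw [hm] at key
  omega
def colf (n : ℕ) : V n → V n → ℕ
  | .inl _, .inr (.inl _) => 1
  | .inr (.inl _), .inl _ => 1
  | .inl _, .inr (.inr i) => i.val + 2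
  | .inr (.inr i), .inl _ => i.val + 2
  | .inr (.inl _), .inr (.inr i) => if i.val % 2 = 0 then i.val + 3 else i.val + 1
  | .inr (.inr i), .inr (.inl _) => if i.val % 2 = 0 then i.val + 3 else i.val + 1
  | _, _ => 0
lemma colf_symm (n : ℕ) : ∀ x y : V n, colf n x y = colf n y x := by
  rintro (x | x | x) (y | y | y) <;> rfl
def cfun (n : ℕ) : (K1mn 1 n).edgeSet → ℕ := fun e => Sym2.lift ⟨colf n, colf_symm n⟩ e.val
@[simp] lemma cfun_euv : cfun n euv = 1 := rfl
@[simp] lemma cfun_eu (i : Fin n) : cfun n (eu i) = i.val + 2 := rfl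
@[simp] lemma cfun_ev (i : Fin n) :
    cfun n (ev i) = if i.val % 2 = 0 then i.val + 3 else i.val + 1 := rfl

lemma forward (hn : 0 < n) (he : Even n) :
    ∃ (t : ℕ) (c : (K1mn 1 n).edgeSet → ℕ), 0 < t ∧ IsIntervalColoring (K1mn 1 n) t c := by
  have hn2 : n % 2 = 0 := Nat.even_iff.mp he
  refine ⟨n + 1, cfun n, by omega, ?_, ?_, ?_, ?_⟩
  · -- bounds
    intro e
    rcases edge_cases e with h | ⟨i, h⟩ | ⟨i, h⟩ <;> subst h
    · simp <;> omega
    · have := i.isLt; simp <;> omega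
    · have := i.isLt; simp only [cfun_ev]; split_ifs with h <;> omega
  · -- all colors used
    intro k hk1 hk2
    rcases Nat.eq_or_lt_of_le hk1 with h1 | h1
    · exact ⟨euv, by simp [← h1]⟩
    · exact ⟨eu ⟨k - 2, by omega⟩, by simp <;> omega⟩
  · -- proper
    intro e₁ e₂ hne hshare
    rcases edge_cases e₁ with h | ⟨i, h⟩ | ⟨i, h⟩ <;> subst h <;>
      rcases edge_cases e₂ with h | ⟨j, h⟩ | ⟨j, h⟩ <;> subst h
    · exact absurd rfl hne
    · have := j.isLt; simp <;> omega
    · have := j.isLt; simp only [cfun_euv, cfun_ev]; split_ifs <;> omega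
    · have := i.isLt; simp <;> omega
    · intro hc
      simp only [cfun_eu, Nat.add_right_cancel_iff] at hc
      exact hne (by rw [show i = j from Fin.ext hc])
    · -- eu i vs ev j : share vertex forces i = j
      obtain ⟨x, hx1, hx2⟩ := hshare
      rw [mem_eu] at hx1; rw [mem_ev] at hx2
      have hij : i = j := by
        rcases hx1 with rfl | rfl
        · rcases hx2 with h' | h'
          · exact absurd h' u_ne_v
          · exact absurd h' (u_ne_w j)
        · rcases hx2 with h' | h'
          · exact absurd h'.symm (v_ne_w i)
          · exact w_inj.mp h'
      subst hij
      simp only [cfun_eu, cfun_ev]; split_ifs <;> omega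
    · have := i.isLt; simp only [cfun_ev, cfun_euv]; split_ifs <;> omega
    · -- ev i vs eu j
      obtain ⟨x, hx1, hx2⟩ := hshare
      rw [mem_ev] at hx1; rw [mem_eu] at hx2
      have hij : i = j := by
        rcases hx1 with rfl | rfl
        · rcases hx2 with h' | h'
          · exact absurd h'.symm u_ne_v
          · exact absurd h' (v_ne_w j)
        · rcases hx2 with h' | h'
          · exact absurd h'.symm (u_ne_w i)
          · exact w_inj.mp h'
      subst hij
      simp only [cfun_eu, cfun_ev]; split_ifs <;> omega
    · intro hc
      simp only [cfun_ev] at hc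
      have : i.val = j.val := by split_ifs at hc <;> omega
      exact hne (by rw [show i = j from Fin.ext this])
  · -- spectra
    rintro (x | x | i)
    · -- vertex u
      have hx : (Sum.inl x : V n) = u := by
        simp [u, Subsingleton.elim x 0]
      refine ⟨1, n + 1, ?_⟩
      rw [hx]
      ext k
      simp only [Spectrum, Set.mem_setOf_eq, Set.mem_Icc]
      constructor
      · rintro ⟨e, hm, rfl⟩
        rcases edge_cases e with h | ⟨i, h⟩ | ⟨i, h⟩ <;> subst h
        · simp <;> omega
        · have := i.isLt; simp <;> omega
        · rw [mem_ev] at hm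
          rcases hm with h' | h'
          · exact absurd h' u_ne_v
          · exact absurd h' (u_ne_w i)
      · rintro ⟨hk1, hk2⟩
        rcases Nat.eq_or_lt_of_le hk1 with h1 | h1
        · exact ⟨euv, by rw [mem_euv]; left; rfl, by simp [← h1]⟩
        · exact ⟨eu ⟨k - 2, by omega⟩, by rw [mem_eu]; left; rfl, by simp <;> omega⟩
    · -- vertex v
      have hx : (Sum.inr (Sum.inl x) : V n) = v := by
        simp [v, Subsingleton.elim x 0]
      refine ⟨1, n + 1, ?_⟩
      rw [hx]
      ext k
      simp only [Spectrum, Set.mem_setOf_eq, Set.mem_Icc]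
      constructor
      · rintro ⟨e, hm, rfl⟩
        rcases edge_cases e with h | ⟨i, h⟩ | ⟨i, h⟩ <;> subst h
        · simp <;> omega
        · rw [mem_eu] at hm
          rcases hm with h' | h'
          · exact absurd h'.symm u_ne_v
          · exact absurd h' (v_ne_w i)
        · have := i.isLt; simp only [cfun_ev]; split_ifs with h <;> omega
      · rintro ⟨hk1, hk2⟩
        rcases Nat.eq_or_lt_of_le hk1 with h1 | h1
        · exact ⟨euv, by rw [mem_euv]; right; rfl, by simp [← h1]⟩
        · rcases Nat.even_or_odd k with hke | hko
          · -- k even, k ≥ 2 : use i = k - 1 (odd)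
            have hke' := Nat.even_iff.mp hke
            refine ⟨ev ⟨k - 1, by omega⟩, by rw [mem_ev]; left; rfl, ?_⟩
            simp only [cfun_ev]
            split_ifs with h <;> omega
          · -- k odd, k ≥ 3 : use i = k - 3 (even)
            have hko' := Nat.odd_iff.mp hko
            refine ⟨ev ⟨k - 3, by omega⟩, by rw [mem_ev]; left; rfl, ?_⟩
            simp only [cfun_ev]
            split_ifs with h <;> omega
    · -- vertex w i
      have hi := i.isLt
      by_cases hpar : i.val % 2 = 0
      · refine ⟨i.val + 2, i.val + 3, ?_⟩
        ext k
        simp only [Spectrum, Set.mem_setOf_eq, Set.mem_Icc]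
        constructor
        · rintro ⟨e, hm, rfl⟩
          rcases edge_cases e with h | ⟨j, h⟩ | ⟨j, h⟩ <;> subst h
          · rw [mem_euv] at hm
            rcases hm with h' | h'
            · exact absurd h'.symm (u_ne_w i)
            · exact absurd h'.symm (v_ne_w i)
          · rw [mem_eu] at hm
            rcases hm with h' | h'
            · exact absurd h'.symm (u_ne_w i)
            · have : j = i := w_inj.mp h'.symm
              subst this; simp <;> omega
          · rw [mem_ev] at hm
            rcases hm with h' | h'
            · exact absurd h'.symm (v_ne_w i)
            · have : j = i := w_inj.mp h'.symm
              subst this; simp only [cfun_ev]; split_ifs <;> omega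
        · rintro ⟨hk1, hk2⟩
          rcases Nat.eq_or_lt_of_le hk1 with h1 | h1
          · exact ⟨eu i, by rw [mem_eu]; right; rfl, by simp <;> omega⟩
          · refine ⟨ev i, by rw [mem_ev]; right; rfl, ?_⟩
            simp only [cfun_ev]; split_ifs <;> omega
      · refine ⟨i.val + 1, i.val + 2, ?_⟩
        ext k
        simp only [Spectrum, Set.mem_setOf_eq, Set.mem_Icc]
        constructor
        · rintro ⟨e, hm, rfl⟩
          rcases edge_cases e with h | ⟨j, h⟩ | ⟨j, h⟩ <;> subst h
          · rw [mem_euv] at hm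
            rcases hm with h' | h'
            · exact absurd h'.symm (u_ne_w i)
            · exact absurd h'.symm (v_ne_w i)
          · rw [mem_eu] at hm
            rcases hm with h' | h'
            · exact absurd h'.symm (u_ne_w i)
            · have : j = i := w_inj.mp h'.symm
              subst this; simp <;> omega
          · rw [mem_ev] at hm
            rcases hm with h' | h'
            · exact absurd h'.symm (v_ne_w i)
            · have : j = i := w_inj.mp h'.symm
              subst this; simp only [cfun_ev]; split_ifs <;> omega
        · rintro ⟨hk1, hk2⟩
          rcases Nat.eq_or_lt_of_le hk2 with h1 | h1
          · exact ⟨eu i, by rw [mem_eu]; right; rfl, by simp <;> omega⟩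
          · refine ⟨ev i, by rw [mem_ev]; right; rfl, ?_⟩
            simp only [cfun_ev]; split_ifs <;> omega
end K11

theorem stmt_7 (n : ℕ) (hn : 0 < n) :
    (∃ (t : ℕ) (c : (K1mn 1 n).edgeSet → ℕ), 0 < t ∧ IsIntervalColoring (K1mn 1 n) t c) ↔
      Even n := by
  constructor
  · rintro ⟨t, c, ht, h⟩
    exact K11.backward hn h
  · intro he
    exact K11.forward hn he
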